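/- Define F : Σ₂ → Σ₂ by F(x)_n = x_{n+2} + x_n(1 + x_{n+1})x_{n+3}, with arithmetic in the field 𝔽₂ of two elements. Then F is an automorphism of the full two-sided 2-shift: F is a bijection of Σ₂, F and its inverse are continuous, and F ∘ σ = σ ∘ F. -/

import Mathlib

/-- The full two-sided 2-shift space: bi-infinite sequences over the field `𝔽₂`,
with the product topology (each factor discrete). -/
abbrev Sigma2 : Type := ℤ → ZMod 2

/-- The shift map `σ` on `Σ₂`: `(σ x) n = x (n+1)`. -/
def shiftMap (x : Sigma2) : Sigma2 := fun n => x (n + 1)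

/-- Brown's map `F(x)_n = x_{n+2} + x_n (1 + x_{n+1}) x_{n+3}` (arithmetic in `𝔽₂`). -/
def brownF (x : Sigma2) : Sigma2 :=
  fun n => x (n + 2) + x n * (1 + x (n + 1)) * x (n + 3)

/-- The "centered" version of Brown's map; an involution. -/
def brownH (x : Sigma2) : Sigma2 :=
  fun n => x n + x (n - 2) * (1 + x (n - 1)) * x (n + 1)

lemma key : ∀ a b c d e f g : ZMod 2,
    (e + c * (1 + d) * f) +
      (c + a * (1 + b) * d) * (1 + (d + b * (1 + c) * e)) * (f + d * (1 + e) * g) = e := by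
  decide

lemma brownH_invol (x : Sigma2) : brownH (brownH x) = x := by
  funext n
  show brownH x n + brownH x (n - 2) * (1 + brownH x (n - 1)) * brownH x (n + 1) = x n
  simp only [brownH]
  rw [show n - 2 - 2 = n - 4 by ring, show n - 2 - 1 = n - 3 by ring,
      show n - 2 + 1 = n - 1 by ring, show n - 1 - 2 = n - 3 by ring,
      show n - 1 - 1 = n - 2 by ring, show n - 1 + 1 = n by ring,
      show n + 1 - 2 = n - 1 by ring, show n + 1 - 1 = n by ring,
      show n + 1 + 1 = n + 2 by ring]
  exact key (x (n - 4)) (x (n - 3)) (x (n - 2)) (x (n - 1)) (x n) (x (n + 1)) (x (n + 2))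

lemma continuous_brownH : Continuous brownH := by
  apply continuous_pi
  intro n
  haveI : ContinuousAdd (ZMod 2) := ⟨continuous_of_discreteTopology⟩
  haveI : ContinuousMul (ZMod 2) := ⟨continuous_of_discreteTopology⟩
  exact ((continuous_apply (A := fun _ : ℤ => ZMod 2) n).add (((continuous_apply (A := fun _ : ℤ => ZMod 2) (n - 2)).mul
    (continuous_const.add (continuous_apply (A := fun _ : ℤ => ZMod 2) (n - 1)))).mul (continuous_apply (A := fun _ : ℤ => ZMod 2) (n + 1))))

/-- `H` as a self-homeomorphism. -/
def brownHHomeo : Sigma2 ≃ₜ Sigma2 where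
  toFun := brownH
  invFun := brownH
  left_inv := brownH_invol
  right_inv := brownH_invol
  continuous_toFun := continuous_brownH
  continuous_invFun := continuous_brownH

/-- The shift as a self-homeomorphism. -/
def shiftHomeo : Sigma2 ≃ₜ Sigma2 where
  toFun := shiftMap
  invFun := fun x n => x (n - 1)
  left_inv := fun x => by funext n; simp [shiftMap]
  right_inv := fun x => by funext n; simp [shiftMap]
  continuous_toFun := continuous_pi fun n => continuous_apply (n + 1)
  continuous_invFun := continuous_pi fun n => continuous_apply (n - 1)

/-- Brown's map `F` is an automorphism of the full two-sided 2-shift: it is a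
bijection of `Σ₂`, it and its inverse are continuous (i.e. it extends to a
self-homeomorphism of `Σ₂`), and it commutes with the shift `σ`. -/
theorem brownF_is_shift_automorphism :
    ∃ e : Sigma2 ≃ₜ Sigma2,
      (∀ x : Sigma2, e x = brownF x) ∧
      (∀ x : Sigma2, e (shiftMap x) = shiftMap (e x)) := by
  refine ⟨(shiftHomeo.trans shiftHomeo).trans brownHHomeo, ?_, ?_⟩
  · intro x
    funext n
    show brownH (shiftMap (shiftMap x)) n = brownF x n
    simp only [brownH, brownF, shiftMap]
    rw [show n - 2 + 1 + 1 = n by ring, show n - 1 + 1 + 1 = n + 1 by ring,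
        show n + 1 + 1 + 1 = n + 3 by ring, show n + 1 + 1 = n + 2 by ring]
  · intro x
    funext n
    show brownH (shiftMap (shiftMap (shiftMap x))) n
        = brownH (shiftMap (shiftMap x)) (n + 1)
    simp only [brownH, shiftMap]
    rw [show n - 2 + 1 + 1 + 1 = n + 1 - 2 + 1 + 1 by ring,
        show n - 1 + 1 + 1 + 1 = n + 1 - 1 + 1 + 1 by ring,
        show n + 1 + 1 + 1 + 1 = n + 1 + 1 + 1 + 1 by ring,
        show n + 1 + 1 + 1 = n + 1 + 1 + 1 by ring]
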